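/- Let M > 0 and let g : [0,∞) → ℝ be a cad-lag function (right-continuous at every point and possessing finite left limits at every point). Then lim_{ε→0⁺} Σ_{k=1}^{⌊M/ε⌋} | ∫_{ε(k-1)}^{εk} ( g(s) − g(ε(k−1)) ) ds | = 0. -/

import Mathlib

open Filter MeasureTheory Set Topology

/-- Composition with a measurable function with countable range is measurable. -/
lemma meas_comp_countable {φ : ℝ → ℝ} (hφ : Measurable φ) (hc : (Set.range φ).Countable)
    (g : ℝ → ℝ) : Measurable (fun s => g (φ s)) := by
  intro A hA
  have h1 : (fun s => g (φ s)) ⁻¹' A = φ ⁻¹' (g ⁻¹' A ∩ Set.range φ) := by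
    ext x
    simp [Set.mem_preimage]
  rw [h1]
  exact hφ ((hc.mono Set.inter_subset_right).measurableSet)

/-- A cad-lag function is bounded on compact intervals. -/
lemma cadlag_bound (g : ℝ → ℝ)
    (hg_right : ∀ t : ℝ, 0 ≤ t → Tendsto g (nhdsWithin t (Set.Ici t)) (nhds (g t)))
    (hg_left : ∀ t : ℝ, 0 < t → ∃ l : ℝ, Tendsto g (nhdsWithin t (Set.Iio t)) (nhds l))
    (K : ℝ) (hK : 0 ≤ K) :
    ∃ C : ℝ, 0 ≤ C ∧ ∀ s ∈ Set.Icc (0:ℝ) K, |g s| ≤ C := by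
  have key : ∀ t : ℝ, ∃ U : Set ℝ, ∃ c : ℝ,
      t ∈ Set.Icc (0:ℝ) K → (U ∈ 𝓝 t ∧ ∀ s ∈ U ∩ Set.Icc (0:ℝ) K, |g s| ≤ c) := by
    intro t
    by_cases ht : t ∈ Set.Icc (0:ℝ) K
    · have hr := hg_right t ht.1
      rw [Metric.tendsto_nhdsWithin_nhds] at hr
      obtain ⟨δ₁, hδ₁, h₁⟩ := hr 1 one_pos
      rcases ht.1.eq_or_lt with h0 | h0
      · refine ⟨Set.Ioo (-δ₁) δ₁, |g t| + 1, fun _ => ⟨Ioo_mem_nhds (by rw [← h0]; linarith)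
          (by rw [← h0]; linarith), fun s hs => ?_⟩⟩
        have hst : s ∈ Set.Ici t := by rw [← h0]; exact hs.2.1
        have : dist s t < δ₁ := by
          rw [Real.dist_eq, ← h0, sub_zero, abs_of_nonneg hs.2.1]
          exact hs.1.2
        have := h₁ hst this
        rw [Real.dist_eq] at this
        calc |g s| = |g t + (g s - g t)| := by ring_nf
          _ ≤ |g t| + |g s - g t| := abs_add_le _ _
          _ ≤ |g t| + 1 := by linarith [le_of_lt this]
      · obtain ⟨l, hl⟩ := hg_left t h0
        rw [Metric.tendsto_nhdsWithin_nhds] at hl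
        obtain ⟨δ₂, hδ₂, h₂⟩ := hl 1 one_pos
        refine ⟨Set.Ioo (t - δ₂) (t + δ₁), max (|g t| + 1) (|l| + 1),
          fun _ => ⟨Ioo_mem_nhds (by linarith) (by linarith), fun s hs => ?_⟩⟩
        rcases lt_or_ge s t with hst | hst
        · have : dist s t < δ₂ := by
            rw [Real.dist_eq, abs_of_nonpos (by linarith)]
            have := hs.1.1
            linarith
          have := h₂ hst this
          rw [Real.dist_eq] at this
          have : |g s| ≤ |l| + 1 := by
            calc |g s| = |l + (g s - l)| := by ring_nf
              _ ≤ |l| + |g s - l| := abs_add_le _ _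
              _ ≤ |l| + 1 := by linarith [le_of_lt this]
          exact this.trans (le_max_right _ _)
        · have : dist s t < δ₁ := by
            rw [Real.dist_eq, abs_of_nonneg (by linarith)]
            have := hs.1.2
            linarith
          have := h₁ hst this
          rw [Real.dist_eq] at this
          have : |g s| ≤ |g t| + 1 := by
            calc |g s| = |g t + (g s - g t)| := by ring_nf
              _ ≤ |g t| + |g s - g t| := abs_add_le _ _
              _ ≤ |g t| + 1 := by linarith [le_of_lt this]
          exact this.trans (le_max_left _ _)
    · exact ⟨Set.univ, 0, fun h => absurd h ht⟩
  choose U c hUc using key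
  obtain ⟨F, hFmem, hFcov⟩ := (isCompact_Icc (a := (0:ℝ)) (b := K)).elim_nhds_subcover U
    (fun x hx => (hUc x hx).1)
  have h0F : ∃ x ∈ F, (0:ℝ) ∈ U x := by
    have h0 : (0:ℝ) ∈ Set.Icc (0:ℝ) K := ⟨le_refl _, hK⟩
    simpa using hFcov h0
  obtain ⟨x₀, hx₀F, _⟩ := h0F
  have hFne : F.Nonempty := ⟨x₀, hx₀F⟩
  refine ⟨max 0 (F.sup' hFne c), le_max_left _ _, fun s hs => ?_⟩
  have := hFcov hs
  simp only [Set.mem_iUnion] at this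
  obtain ⟨i, hiF, hiU⟩ := this
  calc |g s| ≤ c i := (hUc i (hFmem i hiF)).2 s ⟨hiU, hs⟩
    _ ≤ F.sup' hFne c := Finset.le_sup' c hiF
    _ ≤ max 0 (F.sup' hFne c) := le_max_right _ _

/-- A right-continuous function on `[0,∞)` gives a measurable truncation. -/
lemma cadlag_measurable (g : ℝ → ℝ)
    (hg_right : ∀ t : ℝ, 0 ≤ t → Tendsto g (nhdsWithin t (Set.Ici t)) (nhds (g t))) :
    Measurable (fun s : ℝ => g (max s 0)) := by
  set φ : ℕ → ℝ → ℝ := fun n s => max (((⌊s * (n+1)⌋ : ℤ) + 1) / (n+1 : ℝ)) 0 with hφdef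
  have hφmeas : ∀ n, Measurable (φ n) := by
    intro n
    apply Measurable.max _ measurable_const
    have h1 : Measurable (fun s : ℝ => (⌊s * (n+1)⌋ : ℤ)) := (measurable_id.mul_const _).floor
    have h2 : Measurable (fun z : ℤ => ((z : ℝ) + 1) / (n+1 : ℝ)) := measurable_from_top
    exact h2.comp h1
  have hφrange : ∀ n, (Set.range (φ n)).Countable := by
    intro n
    have : Set.range (φ n) ⊆ insert 0 (Set.range (fun z : ℤ => ((z : ℝ) + 1) / (n+1 : ℝ))) := by
      rintro x ⟨s, rfl⟩
      rcases le_or_gt (((⌊s * (n+1)⌋ : ℤ) + 1) / (n+1 : ℝ)) 0 with h | h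
      · left
        simp [hφdef, max_eq_right h]
      · right
        exact ⟨⌊s * (n+1)⌋, by simp [hφdef, max_eq_left h.le]⟩
    exact Set.Countable.mono this ((Set.countable_range _).insert 0)
  have hn1 : ∀ n : ℕ, (0:ℝ) < n + 1 := fun n => by positivity
  have hlb : ∀ n s, max s 0 ≤ φ n s := by
    intro n s
    rcases le_or_gt s 0 with h | h
    · simp [hφdef, max_eq_right h, le_max_right]
    · have : s < ((⌊s * (n+1)⌋ : ℤ) + 1) / (n+1 : ℝ) := by
        rw [lt_div_iff₀ (hn1 n)]
        exact lt_of_lt_of_le (Int.lt_floor_add_one _) (by push_cast; ring_nf; rfl)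
      calc max s 0 = s := max_eq_left h.le
        _ ≤ _ := le_max_of_le_left this.le
  have hub : ∀ n s, φ n s ≤ max s 0 + 1 / (n+1 : ℝ) := by
    intro n s
    apply max_le
    · rw [div_le_iff₀ (hn1 n)]
      calc ((⌊s * (n+1)⌋ : ℤ) : ℝ) + 1 ≤ s * (n+1) + 1 := by
            linarith [Int.floor_le (s * (n+1:ℝ))]
        _ ≤ (max s 0 + 1 / (n+1:ℝ)) * (n+1) := by
            rw [add_mul]
            have h1 : 1 / (n+1:ℝ) * (n+1) = 1 := by field_simp
            have h2 : s * (n+1) ≤ max s 0 * (n+1) := by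
              apply mul_le_mul_of_nonneg_right (le_max_left _ _) (hn1 n).le
            linarith
    · positivity
  apply measurable_of_tendsto_metrizable (f := fun n s => g (φ n s))
  · intro n
    exact meas_comp_countable (hφmeas n) (hφrange n) g
  · rw [tendsto_pi_nhds]
    intro s
    set t := max s 0 with htdef
    have ht : 0 ≤ t := le_max_right _ _
    have htend : Tendsto (fun n => φ n s) atTop (𝓝[Set.Ici t] t) := by
      apply tendsto_nhdsWithin_of_tendsto_nhds_of_eventually_within
      · apply tendsto_of_tendsto_of_tendsto_of_le_of_le (g := fun _ : ℕ => t)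
          (h := fun n : ℕ => t + 1 / (n+1 : ℝ)) tendsto_const_nhds
        · have : Tendsto (fun n : ℕ => 1 / (n+1:ℝ)) atTop (𝓝 0) := tendsto_one_div_add_atTop_nhds_zero_nat
          simpa using tendsto_const_nhds.add this
        · exact fun n => hlb n s
        · exact fun n => hub n s
      · exact Eventually.of_forall fun n => hlb n s
    exact ((hg_right t ht).comp htend)

/-- The set of points where a cad-lag function is not left-continuous is countable. -/
lemma cadlag_countable_jumps (g : ℝ → ℝ)
    (hg_right : ∀ t : ℝ, 0 ≤ t → Tendsto g (nhdsWithin t (Set.Ici t)) (nhds (g t)))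
    (hg_left : ∀ t : ℝ, 0 < t → ∃ l : ℝ, Tendsto g (nhdsWithin t (Set.Iio t)) (nhds l)) :
    {t : ℝ | 0 < t ∧ ¬ Tendsto g (nhdsWithin t (Set.Iio t)) (nhds (g t))}.Countable := by
  classical
  set l : ℝ → ℝ := fun t => if h : 0 < t then (hg_left t h).choose else 0 with hldef
  have hl : ∀ t : ℝ, 0 < t → Tendsto g (𝓝[<] t) (𝓝 (l t)) := fun t ht => by
    rw [hldef]; simp only [dif_pos ht]; exact (hg_left t ht).choose_spec
  set S : ℕ → ℕ → Set ℝ := fun n K =>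
    {t : ℝ | t ∈ Set.Icc (0:ℝ) K ∧ 0 < t ∧ 1/(n+1 : ℝ) < |g t - l t|} with hSdef
  have hsub : {t : ℝ | 0 < t ∧ ¬ Tendsto g (𝓝[<] t) (𝓝 (g t))} ⊆ ⋃ n, ⋃ K, S n K := by
    rintro t ⟨ht, hnt⟩
    have hne : g t ≠ l t := fun h => hnt (h ▸ hl t ht)
    have hpos : 0 < |g t - l t| := abs_pos.2 (sub_ne_zero.2 hne)
    obtain ⟨n, hn⟩ := exists_nat_one_div_lt hpos
    refine Set.mem_iUnion.2 ⟨n, Set.mem_iUnion.2 ⟨⌈t⌉₊, ⟨⟨ht.le, Nat.le_ceil t⟩, ht, ?_⟩⟩⟩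
    exact_mod_cast hn
  have hfin : ∀ n K, (S n K).Finite := by
    intro n K
    rw [← Set.not_infinite]
    intro hinf
    have hSsub : S n K ⊆ Set.Icc (0:ℝ) K := fun t ht => ht.1
    obtain ⟨x, hxK, hacc⟩ := hinf.exists_accPt_of_subset_isCompact isCompact_Icc hSsub
    set r : ℝ := 1/(3*(n+1) : ℝ) with hrdef
    have hrpos : 0 < r := by positivity
    have h2r : 2 * r < 1/(n+1 : ℝ) := by
      have h1 : 2 * r = 2/(3*((n:ℝ)+1)) := by rw [hrdef]; ring
      rw [h1, div_lt_div_iff₀ (by positivity) (by positivity)]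
      nlinarith [Nat.cast_nonneg (α := ℝ) n]
    have hlim_ball : ∀ y : ℝ, 0 < y → ∀ c : ℝ, (∀ᶠ z in 𝓝[<] y, |g z - c| ≤ r) →
        |l y - c| ≤ r := by
      intro y hy c hev
      have hclosed : IsClosed {u : ℝ | |u - c| ≤ r} :=
        isClosed_le ((continuous_id.sub continuous_const).abs) continuous_const
      exact hclosed.mem_of_tendsto (hl y hy) hev
    have hacc' : NeBot ((𝓝[<] x ⊓ 𝓟 (S n K)) ⊔ (𝓝[>] x ⊓ 𝓟 (S n K))) := by
      rw [← inf_sup_right, nhdsLT_sup_nhdsGT]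
      exact hacc
    rcases sup_neBot.1 hacc' with hL | hR
    · -- accumulation from the left
      obtain ⟨y₀, hy₀U, hy₀S⟩ := inf_principal_neBot_iff.1 hL (Set.Iio x) self_mem_nhdsWithin
      have hx0 : 0 < x := lt_trans hy₀S.2.1 hy₀U
      have := hl x hx0
      rw [Metric.tendsto_nhdsWithin_nhds] at this
      obtain ⟨δ, hδpos, hδ⟩ := this r hrpos
      obtain ⟨y, hyU, hyS⟩ := inf_principal_neBot_iff.1 hL (Set.Ioo (x - δ) x)
        (Ioo_mem_nhdsLT (by linarith))
      have hgy : |g y - l x| < r := by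
        have := hδ (Set.mem_Iio.2 hyU.2) (by rw [Real.dist_eq, abs_of_nonpos (by linarith [hyU.1, hyU.2])]; linarith [hyU.1])
        rwa [Real.dist_eq] at this
      have hev : ∀ᶠ z in 𝓝[<] y, |g z - l x| ≤ r := by
        filter_upwards [Ioo_mem_nhdsLT (show x - δ < y from hyU.1)] with z hz
        have := hδ (Set.mem_Iio.2 (lt_trans hz.2 hyU.2))
          (by rw [Real.dist_eq, abs_of_nonpos (by linarith [hz.1, hz.2, hyU.2])]; linarith [hz.1])
        rw [Real.dist_eq] at this
        exact this.le
      have hly : |l y - l x| ≤ r := hlim_ball y hyS.2.1 (l x) hev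
      have : |g y - l y| ≤ 2 * r := by
        calc |g y - l y| = |(g y - l x) + (l x - l y)| := by ring_nf
          _ ≤ |g y - l x| + |l x - l y| := abs_add_le _ _
          _ ≤ r + r := by rw [abs_sub_comm (l x)]; linarith
          _ = 2 * r := by ring
      linarith [hyS.2.2]
    · -- accumulation from the right
      have hx0 : (0:ℝ) ≤ x := hxK.1
      have := hg_right x hx0
      rw [Metric.tendsto_nhdsWithin_nhds] at this
      obtain ⟨δ, hδpos, hδ⟩ := this r hrpos
      obtain ⟨y, hyU, hyS⟩ := inf_principal_neBot_iff.1 hR (Set.Ioo x (x + δ))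
        (Ioo_mem_nhdsGT (by linarith))
      have hgy : |g y - g x| < r := by
        have := hδ (Set.mem_Ici.2 hyU.1.le) (by rw [Real.dist_eq, abs_of_nonneg (by linarith [hyU.1])]; linarith [hyU.2])
        rwa [Real.dist_eq] at this
      have hev : ∀ᶠ z in 𝓝[<] y, |g z - g x| ≤ r := by
        filter_upwards [Ioo_mem_nhdsLT (show x < y from hyU.1)] with z hz
        have := hδ (Set.mem_Ici.2 hz.1.le)
          (by rw [Real.dist_eq, abs_of_nonneg (by linarith [hz.1])]; linarith [hz.2, hyU.2])
        rw [Real.dist_eq] at this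
        exact this.le
      have hly : |l y - g x| ≤ r := hlim_ball y hyS.2.1 (g x) hev
      have : |g y - l y| ≤ 2 * r := by
        calc |g y - l y| = |(g y - g x) + (g x - l y)| := by ring_nf
          _ ≤ |g y - g x| + |g x - l y| := abs_add_le _ _
          _ ≤ r + r := by rw [abs_sub_comm (g x)]; linarith
          _ = 2 * r := by ring
      linarith [hyS.2.2]
  exact Set.Countable.mono hsub
    (Set.countable_iUnion fun n => Set.countable_iUnion fun K => (hfin n K).countable)

/-- For a cad-lag function `g` on `[0,∞)` and `M > 0`, the Riemann-type sums
`∑_{k=1}^{⌊M/ε⌋} |∫_{ε(k-1)}^{εk} (g(s) - g(ε(k-1))) ds|` tend to `0` as `ε → 0⁺`. -/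
theorem cadlag_riemann_sum_tendsto_zero
    (M : ℝ) (hM : 0 < M) (g : ℝ → ℝ)
    (hg_right : ∀ t : ℝ, 0 ≤ t →
      Tendsto g (nhdsWithin t (Set.Ici t)) (nhds (g t)))
    (hg_left : ∀ t : ℝ, 0 < t →
      ∃ l : ℝ, Tendsto g (nhdsWithin t (Set.Iio t)) (nhds l)) :
    Tendsto
      (fun ε : ℝ =>
        ∑ k ∈ Finset.Icc 1 ⌊M / ε⌋₊,
          |∫ s in (ε * ((k : ℝ) - 1))..(ε * (k : ℝ)), (g s - g (ε * ((k : ℝ) - 1)))|)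
      (nhdsWithin 0 (Set.Ioi 0)) (nhds 0) := by
  obtain ⟨C, hC0, hC⟩ := cadlag_bound g hg_right hg_left M hM.le
  set ψ : ℝ → ℝ → ℝ := fun ε s => ε * ((⌊s / ε⌋ : ℤ) : ℝ) with hψdef
  set h : ℝ → ℝ → ℝ := fun ε s => |g s - g (ψ ε s)| with hhdef
  -- basic facts about ψ
  have hψ_mem : ∀ ε : ℝ, 0 < ε → ∀ s : ℝ, 0 ≤ s → ψ ε s ∈ Set.Icc 0 s := by
    intro ε hε s hs
    constructor
    · apply mul_nonneg hε.le
      exact_mod_cast Int.floor_nonneg.2 (div_nonneg hs hε.le)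
    · calc ε * ((⌊s / ε⌋ : ℤ) : ℝ) ≤ ε * (s / ε) :=
            mul_le_mul_of_nonneg_left (Int.floor_le _) hε.le
        _ = s := by field_simp
  -- measurability of the "max-truncated" version of h ε
  have hmeas : ∀ ε : ℝ, 0 < ε →
      Measurable (fun s : ℝ => |g (max s 0) - g (max (ψ ε s) 0)|) := by
    intro ε hε
    have m1 : Measurable (fun s : ℝ => g (max s 0)) := cadlag_measurable g hg_right
    have m2 : Measurable (fun s : ℝ => g (max (ψ ε s) 0)) := by
      have hz : Measurable (fun s : ℝ => (⌊s / ε⌋ : ℤ)) := (measurable_id.div_const ε).floor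
      have hco : Measurable (fun z : ℤ => max (ε * (z : ℝ)) 0) := measurable_from_top
      have hinner : Measurable (fun s : ℝ => max (ψ ε s) 0) := hco.comp hz
      have hrange : (Set.range (fun s : ℝ => max (ψ ε s) 0)).Countable := by
        have : Set.range (fun s : ℝ => max (ψ ε s) 0) ⊆
            Set.range (fun z : ℤ => max (ε * (z : ℝ)) 0) := by
          rintro x ⟨s, rfl⟩
          exact ⟨⌊s / ε⌋, rfl⟩
        exact Set.Countable.mono this (Set.countable_range _)
      exact meas_comp_countable hinner hrange g
    exact (m1.sub m2).abs
  have hkey_eq : ∀ ε : ℝ, 0 < ε → ∀ s : ℝ, 0 ≤ s →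
      |g (max s 0) - g (max (ψ ε s) 0)| = h ε s := by
    intro ε hε s hs
    rw [max_eq_left hs, max_eq_left (hψ_mem ε hε s hs).1]
  have hbound_pt : ∀ ε : ℝ, 0 < ε → ∀ x ∈ Set.Ioc (0:ℝ) M, ‖h ε x‖ ≤ 2 * C := by
    intro ε hε x hx
    have hψx := hψ_mem ε hε x hx.1.le
    have h1 : |g x| ≤ C := hC x ⟨hx.1.le, hx.2⟩
    have h2 : |g (ψ ε x)| ≤ C := hC _ ⟨hψx.1, hψx.2.trans hx.2⟩
    calc ‖h ε x‖ = |g x - g (ψ ε x)| := by rw [Real.norm_eq_abs, abs_abs]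
      _ ≤ |g x| + |g (ψ ε x)| := abs_sub _ _
      _ ≤ 2 * C := by linarith
  have hmeasae : ∀ ε : ℝ, 0 < ε →
      AEStronglyMeasurable (h ε) (volume.restrict (Set.Ioc (0:ℝ) M)) := by
    intro ε hε
    refine ((hmeas ε hε).aestronglyMeasurable).congr ?_
    filter_upwards [ae_restrict_mem measurableSet_Ioc] with s hs
    exact hkey_eq ε hε s hs.1.le
  have hInt : ∀ ε : ℝ, 0 < ε → IntervalIntegrable (h ε) volume 0 M := by
    intro ε hε
    rw [intervalIntegrable_iff_integrableOn_Ioc_of_le hM.le]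
    refine ⟨hmeasae ε hε, ?_⟩
    apply HasFiniteIntegral.restrict_of_bounded (C := 2 * C)
    · exact measure_Ioc_lt_top
    · filter_upwards [ae_restrict_mem measurableSet_Ioc] with x hx
      exact hbound_pt ε hε x hx
  have hεn : ∀ ε : ℝ, 0 < ε → ε * (⌊M / ε⌋₊ : ℝ) ≤ M := by
    intro ε hε
    calc ε * (⌊M / ε⌋₊ : ℝ) ≤ ε * (M / ε) :=
          mul_le_mul_of_nonneg_left (Nat.floor_le (div_nonneg hM.le hε.le)) hε.le
      _ = M := by field_simp
  -- Step A: the sum is bounded by ∫₀ᴹ h ε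
  have hsum : ∀ ε : ℝ, 0 < ε →
      (∑ k ∈ Finset.Icc 1 ⌊M / ε⌋₊,
          |∫ s in (ε * ((k : ℝ) - 1))..(ε * (k : ℝ)), (g s - g (ε * ((k : ℝ) - 1)))|)
        ≤ ∫ s in (0:ℝ)..M, h ε s := by
    intro ε hε
    set n := ⌊M / ε⌋₊ with hn
    have hsubInt : ∀ j : ℕ, j < n → IntervalIntegrable (h ε) volume (ε * j) (ε * (j+1)) := by
      intro j hj
      apply (hInt ε hε).mono_set
      have hj1 : ε * (j:ℝ) ≤ ε * ((j:ℝ)+1) := by nlinarith [Nat.cast_nonneg (α := ℝ) j]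
      rw [Set.uIcc_of_le hj1, Set.uIcc_of_le hM.le]
      apply Set.Icc_subset_Icc (by positivity)
      calc ε * ((j:ℝ)+1) ≤ ε * (n:ℝ) := by
            apply mul_le_mul_of_nonneg_left _ hε.le
            exact_mod_cast hj
        _ ≤ M := hεn ε hε
    have step1 : ∀ k ∈ Finset.Icc 1 n,
        |∫ s in (ε * ((k : ℝ) - 1))..(ε * (k : ℝ)), (g s - g (ε * ((k : ℝ) - 1)))|
          ≤ ∫ s in (ε * ((k : ℝ) - 1))..(ε * (k : ℝ)), h ε s := by
      intro k hk
      rw [Finset.mem_Icc] at hk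
      have hk1 : (1:ℝ) ≤ (k:ℝ) := by exact_mod_cast hk.1
      have hab : ε * ((k : ℝ) - 1) ≤ ε * (k : ℝ) :=
        mul_le_mul_of_nonneg_left (by linarith) hε.le
      refine le_trans (intervalIntegral.abs_integral_le_integral_abs hab) (le_of_eq ?_)
      apply intervalIntegral.integral_congr_ae
      have hb0 : ∀ᵐ x : ℝ, x ∉ ({ε * (k:ℝ)} : Set ℝ) :=
        compl_mem_ae_iff.2 (Real.volume_singleton)
      filter_upwards [hb0] with x hxb hxmem
      rw [Set.uIoc_of_le hab] at hxmem
      have hxlt : x < ε * (k:ℝ) := lt_of_le_of_ne hxmem.2 (by simpa using hxb)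
      have hfloor : ⌊x / ε⌋ = (k : ℤ) - 1 := by
        rw [Int.floor_eq_iff]
        constructor
        · push_cast
          rw [le_div_iff₀ hε]
          calc ((k:ℝ) - 1) * ε = ε * ((k:ℝ) - 1) := by ring
            _ ≤ x := hxmem.1.le
        · push_cast
          rw [div_lt_iff₀ hε]
          calc x < ε * (k:ℝ) := hxlt
            _ = ((k:ℝ) - 1 + 1) * ε := by ring
      have hψx : ψ ε x = ε * ((k:ℝ) - 1) := by
        rw [hψdef]
        simp only [hfloor]
        push_cast
        ring
      rw [hhdef]
      simp only [hψx]
    calc (∑ k ∈ Finset.Icc 1 n,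
          |∫ s in (ε * ((k : ℝ) - 1))..(ε * (k : ℝ)), (g s - g (ε * ((k : ℝ) - 1)))|)
        ≤ ∑ k ∈ Finset.Icc 1 n, ∫ s in (ε * ((k : ℝ) - 1))..(ε * (k : ℝ)), h ε s :=
          Finset.sum_le_sum step1
      _ = ∑ j ∈ Finset.range n, ∫ s in (ε * (j:ℝ))..(ε * ((j:ℝ)+1)), h ε s := by
          rw [← Finset.Ico_add_one_right_eq_Icc, Finset.sum_Ico_eq_sum_range,
            show n + 1 - 1 = n by omega]
          apply Finset.sum_congr rfl
          intro j _
          have e1 : ε * (((1+j : ℕ):ℝ) - 1) = ε * (j:ℝ) := by push_cast; ring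
          have e2 : ε * ((1+j : ℕ):ℝ) = ε * ((j:ℝ)+1) := by push_cast; ring
          rw [e1, e2]
      _ = ∫ s in (0:ℝ)..(ε * (n:ℝ)), h ε s := by
          have := intervalIntegral.sum_integral_adjacent_intervals
            (a := fun j : ℕ => ε * (j:ℝ)) (f := h ε) (μ := volume) (n := n)
            (fun j hj => by
              show IntervalIntegrable (h ε) volume (ε * ((j:ℕ):ℝ)) (ε * ((j+1:ℕ):ℝ))
              have e : ((j+1 : ℕ):ℝ) = (j:ℝ)+1 := by push_cast; ring
              rw [e]
              exact hsubInt j hj)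
          simp only [Nat.cast_zero, mul_zero] at this
          rw [← this]
          apply Finset.sum_congr rfl
          intro j _
          have e2 : ε * ((j+1 : ℕ):ℝ) = ε * ((j:ℝ)+1) := by push_cast; ring
          rw [e2]
      _ ≤ ∫ s in (0:ℝ)..M, h ε s := by
          apply intervalIntegral.integral_mono_interval (le_refl (0:ℝ))
            (by positivity) (hεn ε hε)
          · filter_upwards with x
            exact abs_nonneg _
          · exact hInt ε hε
  -- Step B : the dominating integral tends to 0
  have hB : Tendsto (fun ε : ℝ => ∫ s in (0:ℝ)..M, h ε s) (𝓝[>] (0:ℝ)) (𝓝 0) := by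
    have key := intervalIntegral.tendsto_integral_filter_of_dominated_convergence
      (μ := volume) (a := (0:ℝ)) (b := M) (F := h) (f := fun _ => (0:ℝ))
      (l := 𝓝[>] (0:ℝ)) (bound := fun _ => 2 * C) ?_ ?_ ?_ ?_
    · simpa using key
    · filter_upwards [self_mem_nhdsWithin] with ε hε
      rw [Set.uIoc_of_le hM.le]
      exact hmeasae ε hε
    · filter_upwards [self_mem_nhdsWithin] with ε hε
      apply Eventually.of_forall
      intro x hx
      rw [Set.uIoc_of_le hM.le] at hx
      exact hbound_pt ε hε x hx
    · exact intervalIntegrable_const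
    · have hD := cadlag_countable_jumps g hg_right hg_left
      have hDae : ∀ᵐ x : ℝ, x ∉ {t : ℝ | 0 < t ∧ ¬ Tendsto g (𝓝[<] t) (𝓝 (g t))} :=
        compl_mem_ae_iff.2 (hD.measure_zero volume)
      filter_upwards [hDae] with x hx hxmem
      rw [Set.uIoc_of_le hM.le] at hxmem
      have hx0 : 0 < x := hxmem.1
      have hxcont : Tendsto g (𝓝[<] x) (𝓝 (g x)) := by
        by_contra hcon
        exact hx ⟨hx0, hcon⟩
      have hIic : Tendsto g (𝓝[Set.Iic x] x) (𝓝 (g x)) := by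
        have hsplit : 𝓝[Set.Iic x] x = 𝓝[Set.Iio x] x ⊔ 𝓝[{x}] x := by
          rw [← nhdsWithin_union, Set.Iio_union_right]
        rw [hsplit, tendsto_sup]
        refine ⟨hxcont, ?_⟩
        rw [nhdsWithin_singleton]
        exact tendsto_pure_nhds g x
      have hψtend : Tendsto (fun ε => ψ ε x) (𝓝[>] (0:ℝ)) (𝓝[Set.Iic x] x) := by
        apply tendsto_nhdsWithin_of_tendsto_nhds_of_eventually_within
        · apply tendsto_of_tendsto_of_tendsto_of_le_of_le'
            (g := fun ε : ℝ => x - ε) (h := fun _ : ℝ => x)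
          · have hid : Tendsto (fun ε : ℝ => ε) (𝓝[>] (0:ℝ)) (𝓝 0) :=
              tendsto_id.mono_left nhdsWithin_le_nhds
            have := tendsto_const_nhds (α := ℝ) (x := x) (f := 𝓝[>] (0:ℝ)) |>.sub hid
            simpa using this
          · exact tendsto_const_nhds
          · filter_upwards [self_mem_nhdsWithin] with ε hε
            have hε' : (0:ℝ) < ε := hε
            have := Int.sub_one_lt_floor (x / ε)
            have h2 : ε * (x / ε - 1) < ψ ε x := by
              apply mul_lt_mul_of_pos_left _ hε'
              exact_mod_cast this
            calc x - ε = ε * (x / ε - 1) := by field_simp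
              _ ≤ ψ ε x := h2.le
          · filter_upwards [self_mem_nhdsWithin] with ε hε
            exact (hψ_mem ε hε x hx0.le).2
        · filter_upwards [self_mem_nhdsWithin] with ε hε
          exact (hψ_mem ε hε x hx0.le).2
      have hcomp : Tendsto (fun ε => g (ψ ε x)) (𝓝[>] (0:ℝ)) (𝓝 (g x)) :=
        hIic.comp hψtend
      have : Tendsto (fun ε => h ε x) (𝓝[>] (0:ℝ)) (𝓝 |g x - g x|) :=
        (tendsto_const_nhds.sub hcomp).abs
      simpa using this
  -- Step C : squeeze
  apply squeeze_zero'
  · filter_upwards with ε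
    exact Finset.sum_nonneg fun k _ => abs_nonneg _
  · filter_upwards [self_mem_nhdsWithin] with ε hε
    exact hsum ε hε
  · exact hB
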